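/- Let R_a > 0, R ∈ (0, R_a), and let f : ℝ → ℝ be continuous with f(z) = 0 for all z ≥ R_a. Define P(z) := −∫_R^z f(y) dy and V(x̄) := Σ_{1 ≤ i < j ≤ n} P(‖x_i − x_j‖). Then at every configuration x̄ of pairwise-distinct points, the derivative of V in the direction of the virtual-force vector field equals minus the squared norm of the vector field: Σ_{i=1}^n ⟨∇_{x_i} V(x̄), u_i(x̄)⟩ = − Σ_{i=1}^n ‖u_i(x̄)‖², where u_i(x̄) = Σ_{j ≠ i} f(‖r_ij‖) · r̂_ij. -/

import Mathlib

open InnerProductSpace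

private lemma aux_norm_fderiv {F : Type*} [NormedAddCommGroup F] [InnerProductSpace ℝ F]
    {y : F} (hy : y ≠ 0) :
    HasFDerivAt (fun z : F => ‖z‖) (innerSL ℝ (‖y‖⁻¹ • y)) y := by
  have h2 : HasFDerivAt (fun z : F => ‖z‖ ^ 2) (2 • innerSL ℝ y) y := by
    simpa using (hasFDerivAt_id y).norm_sq
  have hne : (‖y‖ : ℝ) ^ 2 ≠ 0 := pow_ne_zero 2 (norm_ne_zero_iff.mpr hy)
  have hs : HasDerivAt Real.sqrt (1 / (2 * Real.sqrt (‖y‖ ^ 2))) (‖y‖ ^ 2) :=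
    Real.hasDerivAt_sqrt hne
  have h3 := hs.comp_hasFDerivAt y h2
  have hfun : (fun z : F => Real.sqrt (‖z‖ ^ 2)) = fun z : F => ‖z‖ := by
    funext z; exact Real.sqrt_sq (norm_nonneg z)
  rw [Function.comp_def, hfun] at h3
  refine h3.congr_fderiv ?_
  ext z
  simp only [ContinuousLinearMap.coe_smul', Pi.smul_apply, innerSL_apply_apply,
    real_inner_smul_left, ContinuousLinearMap.smul_apply, smul_eq_mul,
    Real.sqrt_sq (norm_nonneg y), two_smul, ContinuousLinearMap.add_apply]
  have : ‖y‖ ≠ 0 := norm_ne_zero_iff.mpr hy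
  field_simp
  ring

private lemma aux_term_fderiv {F : Type*} [NormedAddCommGroup F] [InnerProductSpace ℝ F]
    (P f : ℝ → ℝ) (hP' : ∀ z, HasDerivAt P (-(f z)) z) (a b : F) (hba : b ≠ a) :
    HasFDerivAt (fun y => P ‖y - a‖)
      ((-(f ‖b - a‖)) • innerSL ℝ (‖b - a‖⁻¹ • (b - a))) b := by
  have h1 : HasFDerivAt (fun y : F => ‖y - a‖) (innerSL ℝ (‖b - a‖⁻¹ • (b - a))) b := by
    have h0 := aux_norm_fderiv (sub_ne_zero.mpr hba)
    have h2 : HasFDerivAt (fun y : F => y - a) (ContinuousLinearMap.id ℝ F) b :=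
      (hasFDerivAt_id b).sub_const a
    have := h0.comp b h2
    simpa [Function.comp_def] using this
  have := (hP' ‖b - a‖).comp_hasFDerivAt b h1
  simpa [Function.comp_def] using this

/-- At every configuration of pairwise-distinct points, the derivative of
the total potential `V` in the direction of the virtual-force vector field `u` equals
minus the squared norm of the vector field:
`Σ_i ⟨∇_{x_i} V(x̄), u_i(x̄)⟩ = −Σ_i ‖u_i(x̄)‖²`. -/
theorem stmt_7 (n : ℕ) (Ra R : ℝ) (hRa : 0 < Ra) (hR : R ∈ Set.Ioo 0 Ra)
    (f : ℝ → ℝ) (hf : Continuous f) (hfvanish : ∀ z ≥ Ra, f z = 0)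
    (P : ℝ → ℝ) (hP : ∀ z, P z = -∫ y in R..z, f y)
    (V : (Fin n → EuclideanSpace ℝ (Fin 2)) → ℝ)
    (hV : ∀ y, V y = ∑ i : Fin n,
      ∑ j ∈ Finset.univ.filter (fun j => i < j), P ‖y i - y j‖)
    (x : Fin n → EuclideanSpace ℝ (Fin 2))
    (hx : ∀ i j : Fin n, i ≠ j → x i ≠ x j)
    (u : Fin n → EuclideanSpace ℝ (Fin 2))
    (hu : ∀ i, u i = ∑ j ∈ Finset.univ.filter (fun j => j ≠ i),
        f ‖x i - x j‖ • (‖x i - x j‖⁻¹ • (x i - x j))) :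
    ∑ i : Fin n,
      (inner ℝ (gradient (fun y => V (Function.update x i y)) (x i)) (u i) : ℝ)
      = -∑ i : Fin n, ‖u i‖ ^ 2 := by
  have hP' : ∀ z, HasDerivAt P (-(f z)) z := by
    intro z
    have hPe : P = fun t => -∫ y in R..t, f y := funext hP
    rw [hPe]
    exact (intervalIntegral.integral_hasDerivAt_right (hf.intervalIntegrable _ _)
      (hf.stronglyMeasurableAtFilter _ _) hf.continuousAt).neg
  have key : ∀ i : Fin n,
      HasGradientAt (fun y => V (Function.update x i y)) (-(u i)) (x i) := by
    intro i
    set gD : Fin n → (EuclideanSpace ℝ (Fin 2) →L[ℝ] ℝ) := fun j =>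
      (-(f ‖x i - x j‖)) • innerSL ℝ (‖x i - x j‖⁻¹ • (x i - x j)) with hgD
    have hfun : (fun y => V (Function.update x i y)) =
        fun y => ∑ k : Fin n, ∑ l ∈ Finset.univ.filter (fun l => k < l),
          P ‖(if k = i then y else x k) - (if l = i then y else x l)‖ := by
      funext y
      simp only [hV, Function.update_apply]
    have hsum : HasFDerivAt
        (fun y => ∑ k : Fin n, ∑ l ∈ Finset.univ.filter (fun l => k < l),
          P ‖(if k = i then y else x k) - (if l = i then y else x l)‖)
        (∑ k : Fin n, ∑ l ∈ Finset.univ.filter (fun l => k < l),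
          (if k = i then gD l else if l = i then gD k else 0)) (x i) := by
      apply HasFDerivAt.fun_sum
      intro k _
      apply HasFDerivAt.fun_sum
      intro l hl
      have hkl : k < l := (Finset.mem_filter.mp hl).2
      by_cases hk : k = i
      · subst hk
        have hl' : l ≠ k := hkl.ne'
        simp only [if_pos rfl, if_neg hl']
        exact aux_term_fderiv P f hP' (x l) (x k) (hx k l hkl.ne)
      · by_cases hl2 : l = i
        · simp only [if_neg hk, if_pos hl2]
          have heq : (fun y => P ‖x k - y‖) = fun y => P ‖y - x k‖ := by
            funext y; rw [norm_sub_rev]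
          rw [heq]
          exact aux_term_fderiv P f hP' (x k) (x i) (hx i k (Ne.symm hk))
        · simp only [if_neg hk, if_neg hl2]
          exact hasFDerivAt_const _ _
    have hDsum : (∑ k : Fin n, ∑ l ∈ Finset.univ.filter (fun l => k < l),
          (if k = i then gD l else if l = i then gD k else 0)) =
        ∑ j ∈ Finset.univ.filter (fun j => j ≠ i), gD j := by
      rw [← Finset.add_sum_erase _ _ (Finset.mem_univ i)]
      have h2 : ∀ k ∈ Finset.univ.erase i,
          (∑ l ∈ Finset.univ.filter (fun l => k < l),
            (if k = i then gD l else if l = i then gD k else 0)) =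
          if k < i then gD k else 0 := by
        intro k hk
        have hk' : k ≠ i := (Finset.mem_erase.mp hk).1
        simp only [if_neg hk']
        rw [Finset.sum_ite_eq' (Finset.univ.filter (fun l => k < l)) i (fun _ => gD k)]
        simp [Finset.mem_filter]
      rw [Finset.sum_congr rfl h2]
      have h1 : ∀ l ∈ Finset.univ.filter (fun l => i < l),
          (if i = i then gD l else if l = i then gD i else 0) = gD l :=
        fun l _ => if_pos rfl
      rw [Finset.sum_congr rfl h1]
      rw [← Finset.sum_filter]
      have hef : (Finset.univ.erase i).filter (fun k => k < i) =
          Finset.univ.filter (fun k => k < i) := by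
        ext k
        simp only [Finset.mem_filter, Finset.mem_erase, Finset.mem_univ, true_and, and_true]
        exact ⟨fun h => h.2, fun h => ⟨h.ne, h⟩⟩
      rw [hef]
      have hsplit : Finset.univ.filter (fun j : Fin n => j ≠ i) =
          Finset.univ.filter (fun j => i < j) ∪ Finset.univ.filter (fun j => j < i) := by
        ext j
        simp only [Finset.mem_filter, Finset.mem_union, Finset.mem_univ, true_and]
        constructor
        · intro h; rcases lt_or_gt_of_ne h with h' | h'
          · exact Or.inr h'
          · exact Or.inl h'
        · rintro (h | h)
          · exact h.ne'
          · exact h.ne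
      have hdisj : Disjoint (Finset.univ.filter (fun j : Fin n => i < j))
          (Finset.univ.filter (fun j => j < i)) := by
        rw [Finset.disjoint_left]
        intro j hj1 hj2
        simp only [Finset.mem_filter, Finset.mem_univ, true_and] at hj1 hj2
        exact absurd hj2 (not_lt.mpr hj1.le)
      rw [hsplit, Finset.sum_union hdisj]
    have htd : (toDual ℝ (EuclideanSpace ℝ (Fin 2)) (-(u i))) =
        ∑ j ∈ Finset.univ.filter (fun j => j ≠ i), gD j := by
      ext z
      simp only [toDual_apply_apply, ContinuousLinearMap.sum_apply, hgD,
        ContinuousLinearMap.smul_apply, innerSL_apply_apply, smul_eq_mul, hu i,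
        inner_neg_left, sum_inner, real_inner_smul_left, neg_mul,
        Finset.sum_neg_distrib]
    rw [hfun]
    rw [hasGradientAt_iff_hasFDerivAt, htd, ← hDsum]
    exact hsum
  have hgrad : ∀ i : Fin n,
      gradient (fun y => V (Function.update x i y)) (x i) = -(u i) :=
    fun i => (key i).gradient
  calc ∑ i : Fin n,
      (inner ℝ (gradient (fun y => V (Function.update x i y)) (x i)) (u i) : ℝ)
      = ∑ i : Fin n, (inner ℝ (-(u i)) (u i) : ℝ) := by
        exact Finset.sum_congr rfl fun i _ => by rw [hgrad i]
    _ = -∑ i : Fin n, ‖u i‖ ^ 2 := by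
        rw [← Finset.sum_neg_distrib]
        exact Finset.sum_congr rfl fun i _ => by
          rw [inner_neg_left, real_inner_self_eq_norm_sq]
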